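/- For two graphs G and H of orders m,n ≥ 2, dem(G ∨ H) = c(G ∨ H) = min{c(G)+n, c(H)+m}, where G ∨ H is the join of G and H. -/

import Mathlib

open SimpleGraph

/-- A set `M` of vertices is a distance-edge-monitoring set of `G`. -/
def demSet {V : Type*} (G : SimpleGraph V) (M : Set V) : Prop :=
  ∀ e ∈ G.edgeSet, ∃ x ∈ M, ∃ y : V, G.dist x y ≠ (G.deleteEdges {e}).dist x y

/-- The distance-edge-monitoring number of `G`. -/
noncomputable def dem {V : Type*} (G : SimpleGraph V) [Fintype V] : ℕ :=
  sInf {k | ∃ M : Finset V, M.card = k ∧ demSet G ↑M}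

/-- `C` is a vertex cover of `G`. -/
def isVC {V : Type*} (G : SimpleGraph V) (C : Set V) : Prop :=
  ∀ e ∈ G.edgeSet, ∃ x ∈ C, x ∈ e

/-- The vertex cover number of `G`. -/
noncomputable def vcNum {V : Type*} (G : SimpleGraph V) [Fintype V] : ℕ :=
  sInf {k | ∃ C : Finset V, C.card = k ∧ isVC G ↑C}

/-- The join (complete product) of two graphs. -/
def joinG {V W : Type*} (G : SimpleGraph V) (H : SimpleGraph W) : SimpleGraph (V ⊕ W) where
  Adj x y :=
    match x, y with
    | Sum.inl a, Sum.inl b => G.Adj a b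
    | Sum.inr a, Sum.inr b => H.Adj a b
    | Sum.inl _, Sum.inr _ => True
    | Sum.inr _, Sum.inl _ => True
  symm := ⟨by rintro (a|a) (b|b) h <;> first | exact h.symm | trivial⟩
  loopless := ⟨by rintro (a|a) h <;> exact SimpleGraph.irrefl _ h⟩

lemma dist_eq_two' {V : Type*} (G : SimpleGraph V) {x y : V} (hxy : x ≠ y)
    (hna : ¬ G.Adj x y) {w : V} (h1 : G.Adj x w) (h2 : G.Adj w y) : G.dist x y = 2 := by
  have hle : G.dist x y ≤ 2 := by
    have := G.dist_le (Walk.cons h1 (Walk.cons h2 Walk.nil))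
    simpa using this
  have h0 : G.dist x y ≠ 0 := by
    rw [ne_eq, SimpleGraph.dist_eq_zero_iff_eq_or_not_reachable]
    push_neg
    exact ⟨hxy, ⟨Walk.cons h1 (Walk.cons h2 Walk.nil)⟩⟩
  have h1' : G.dist x y ≠ 1 := fun h => hna (SimpleGraph.dist_eq_one_iff_adj.mp h)
  omega

lemma vc_demSet {V : Type*} (G : SimpleGraph V) (C : Set V) (h : isVC G C) : demSet G C := by
  intro e he
  obtain ⟨x, hxC, hxe⟩ := h e he
  obtain ⟨y, rfl⟩ := Sym2.mem_iff_exists.mp hxe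
  have hadj : G.Adj x y := G.mem_edgeSet.mp he
  refine ⟨x, hxC, y, ?_⟩
  rw [SimpleGraph.dist_eq_one_iff_adj.mpr hadj]
  intro h1
  have : (G.deleteEdges {s(x,y)}).Adj x y := SimpleGraph.dist_eq_one_iff_adj.mp h1.symm
  rw [SimpleGraph.deleteEdges_adj] at this
  exact this.2 rfl

lemma avoid {α : Type*} [Fintype α] (h : 2 ≤ Fintype.card α) (p : α → Prop)
    (hp : ∀ a b, p a → p b → a = b) : ∃ a, ¬ p a := by
  obtain ⟨a, b, hab⟩ := Fintype.exists_pair_of_one_lt_card h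
  by_cases ha : p a
  · exact ⟨b, fun hb => hab (hp a b ha hb)⟩
  · exact ⟨a, ha⟩

lemma key {V W : Type*} [Fintype V] [Fintype W] (G : SimpleGraph V) (H : SimpleGraph W)
    (hm : 2 ≤ Fintype.card V) (hn : 2 ≤ Fintype.card W)
    (e : Sym2 (V ⊕ W)) (x : V ⊕ W) (hx : x ∉ e) (y : V ⊕ W) :
    ((joinG G H).deleteEdges {e}).dist x y = (joinG G H).dist x y := by
  set J := joinG G H with hJ
  set J' := J.deleteEdges {e} with hJ'
  by_cases hxy : x = y
  · subst hxy; rw [SimpleGraph.dist_self, SimpleGraph.dist_self]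
  by_cases hadj : J.Adj x y
  · have hne : s(x,y) ≠ e := fun h => hx (h ▸ Sym2.mem_mk_left x y)
    have : J'.Adj x y := by rw [hJ', SimpleGraph.deleteEdges_adj]; exact ⟨hadj, by simpa using hne⟩
    rw [SimpleGraph.dist_eq_one_iff_adj.mpr this, SimpleGraph.dist_eq_one_iff_adj.mpr hadj]
  · have hna' : ¬ J'.Adj x y := fun h => hadj ((SimpleGraph.deleteEdges_le _) h)
    have hcom : ∃ w, J'.Adj x w ∧ J'.Adj w y := by
      match x, y with
      | Sum.inl a, Sum.inl b =>
        obtain ⟨w, hw⟩ := avoid hn (fun w => s(Sum.inr w, Sum.inl b) = e) (by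
          intro w1 w2 h1 h2
          rw [← h2, Sym2.eq_iff] at h1
          rcases h1 with ⟨h1, _⟩ | ⟨h1, h2⟩
          · exact Sum.inr.inj h1
          · exact absurd h1 (by simp))
        refine ⟨Sum.inr w, ?_, ?_⟩ <;> rw [hJ', SimpleGraph.deleteEdges_adj]
        · refine ⟨trivial, ?_⟩
          simp only [Set.mem_singleton_iff]
          intro h
          exact hx (h ▸ Sym2.mem_mk_left _ _)
        · exact ⟨trivial, by simpa using hw⟩
      | Sum.inr a, Sum.inr b =>
        obtain ⟨w, hw⟩ := avoid hm (fun w => s(Sum.inl w, Sum.inr b) = e) (by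
          intro w1 w2 h1 h2
          rw [← h2, Sym2.eq_iff] at h1
          rcases h1 with ⟨h1, _⟩ | ⟨h1, h2⟩
          · exact Sum.inl.inj h1
          · exact absurd h1 (by simp))
        refine ⟨Sum.inl w, ?_, ?_⟩ <;> rw [hJ', SimpleGraph.deleteEdges_adj]
        · refine ⟨trivial, ?_⟩
          simp only [Set.mem_singleton_iff]
          intro h
          exact hx (h ▸ Sym2.mem_mk_left _ _)
        · exact ⟨trivial, by simpa using hw⟩
      | Sum.inl a, Sum.inr b => exact absurd trivial hadj
      | Sum.inr a, Sum.inl b => exact absurd trivial hadj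
    obtain ⟨w, h1, h2⟩ := hcom
    rw [dist_eq_two' J' hxy hna' h1 h2,
      dist_eq_two' J hxy hadj ((SimpleGraph.deleteEdges_le _) h1) ((SimpleGraph.deleteEdges_le _) h2)]

lemma demSet_iff_isVC {V W : Type*} [Fintype V] [Fintype W] (G : SimpleGraph V)
    (H : SimpleGraph W) (hm : 2 ≤ Fintype.card V) (hn : 2 ≤ Fintype.card W)
    (M : Set (V ⊕ W)) : demSet (joinG G H) M ↔ isVC (joinG G H) M := by
  constructor
  · intro h e he
    obtain ⟨x, hxM, y, hd⟩ := h e he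
    refine ⟨x, hxM, ?_⟩
    by_contra hx
    exact hd (key G H hm hn e x hx y).symm
  · exact vc_demSet _ M

lemma univ_isVC {V : Type*} [Fintype V] (G : SimpleGraph V) :
    isVC G ↑(Finset.univ : Finset V) := by
  intro e he
  obtain ⟨x, y⟩ := e
  exact ⟨x, by simp, Sym2.mem_mk_left x y⟩

lemma vcNum_mem {V : Type*} [Fintype V] (G : SimpleGraph V) :
    ∃ C : Finset V, C.card = vcNum G ∧ isVC G ↑C := by
  have : vcNum G ∈ {k | ∃ C : Finset V, C.card = k ∧ isVC G ↑C} :=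
    Nat.sInf_mem ⟨(Finset.univ : Finset V).card, Finset.univ, rfl, univ_isVC G⟩
  exact this

lemma join_upper_left {V W : Type*} [Fintype V] [Fintype W] (G : SimpleGraph V)
    (H : SimpleGraph W) :
    vcNum (joinG G H) ≤ vcNum G + Fintype.card W := by
  classical
  obtain ⟨C, hC, hVC⟩ := vcNum_mem G
  refine Nat.sInf_le ⟨C.image Sum.inl ∪ Finset.univ.image Sum.inr, ?_, ?_⟩
  · rw [Finset.card_union_of_disjoint (by
      simp [Finset.disjoint_left]),
      Finset.card_image_of_injective _ Sum.inl_injective,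
      Finset.card_image_of_injective _ Sum.inr_injective, hC, Finset.card_univ]
  · intro e he
    obtain ⟨u, v⟩ := e
    match u, v with
    | Sum.inl a, Sum.inl b =>
      have : G.Adj a b := he
      obtain ⟨x, hxC, hxe⟩ := hVC s(a, b) this
      rcases Sym2.mem_iff.mp hxe with rfl | rfl
      · exact ⟨Sum.inl x, Finset.mem_coe.mpr (Finset.mem_union_left _ (Finset.mem_image_of_mem _ (Finset.mem_coe.mp hxC))), Sym2.mem_mk_left _ _⟩
      · exact ⟨Sum.inl x, Finset.mem_coe.mpr (Finset.mem_union_left _ (Finset.mem_image_of_mem _ (Finset.mem_coe.mp hxC))), Sym2.mem_mk_right _ _⟩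
    | Sum.inl a, Sum.inr b => exact ⟨Sum.inr b, by simp, Sym2.mem_mk_right _ _⟩
    | Sum.inr a, Sum.inl b => exact ⟨Sum.inr a, by simp, Sym2.mem_mk_left _ _⟩
    | Sum.inr a, Sum.inr b => exact ⟨Sum.inr a, by simp, Sym2.mem_mk_left _ _⟩

lemma join_upper_right {V W : Type*} [Fintype V] [Fintype W] (G : SimpleGraph V)
    (H : SimpleGraph W) :
    vcNum (joinG G H) ≤ vcNum H + Fintype.card V := by
  classical
  obtain ⟨C, hC, hVC⟩ := vcNum_mem H
  refine Nat.sInf_le ⟨C.image Sum.inr ∪ Finset.univ.image Sum.inl, ?_, ?_⟩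
  · rw [Finset.card_union_of_disjoint (by
      simp [Finset.disjoint_left]),
      Finset.card_image_of_injective _ Sum.inr_injective,
      Finset.card_image_of_injective _ Sum.inl_injective, hC, Finset.card_univ]
  · intro e he
    obtain ⟨u, v⟩ := e
    match u, v with
    | Sum.inr a, Sum.inr b =>
      have : H.Adj a b := he
      obtain ⟨x, hxC, hxe⟩ := hVC s(a, b) this
      rcases Sym2.mem_iff.mp hxe with rfl | rfl
      · exact ⟨Sum.inr x, Finset.mem_coe.mpr (Finset.mem_union_left _ (Finset.mem_image_of_mem _ (Finset.mem_coe.mp hxC))), Sym2.mem_mk_left _ _⟩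
      · exact ⟨Sum.inr x, Finset.mem_coe.mpr (Finset.mem_union_left _ (Finset.mem_image_of_mem _ (Finset.mem_coe.mp hxC))), Sym2.mem_mk_right _ _⟩
    | Sum.inl a, Sum.inr b => exact ⟨Sum.inl a, by simp, Sym2.mem_mk_left _ _⟩
    | Sum.inr a, Sum.inl b => exact ⟨Sum.inl b, by simp, Sym2.mem_mk_right _ _⟩
    | Sum.inl a, Sum.inl b => exact ⟨Sum.inl a, by simp, Sym2.mem_mk_left _ _⟩

lemma join_lower {V W : Type*} [Fintype V] [Fintype W] (G : SimpleGraph V)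
    (H : SimpleGraph W) (C : Finset (V ⊕ W)) (hVC : isVC (joinG G H) ↑C) :
    min (vcNum G + Fintype.card W) (vcNum H + Fintype.card V) ≤ C.card := by
  classical
  by_cases hall : ∀ w : W, Sum.inr w ∈ C
  · -- all of W-side is in C
    set D : Finset V := Finset.univ.filter (fun v => Sum.inl v ∈ C) with hD
    have hDVC : isVC G ↑D := by
      intro e he
      obtain ⟨a, b⟩ := e
      have : (joinG G H).Adj (Sum.inl a) (Sum.inl b) := he
      obtain ⟨x, hxC, hxe⟩ := hVC s(Sum.inl a, Sum.inl b) this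
      rcases Sym2.mem_iff.mp hxe with rfl | rfl
      · exact ⟨a, by simp [hD]; exact hxC, Sym2.mem_mk_left _ _⟩
      · exact ⟨b, by simp [hD]; exact hxC, Sym2.mem_mk_right _ _⟩
    have h1 : vcNum G ≤ D.card := Nat.sInf_le ⟨D, rfl, hDVC⟩
    have hsub : D.image Sum.inl ∪ Finset.univ.image Sum.inr ⊆ C := by
      intro x hx
      rcases Finset.mem_union.mp hx with hx | hx
      · obtain ⟨v, hv, rfl⟩ := Finset.mem_image.mp hx
        exact (Finset.mem_filter.mp hv).2
      · obtain ⟨w, _, rfl⟩ := Finset.mem_image.mp hx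
        exact hall w
    have hcard : D.card + Fintype.card W ≤ C.card := by
      have := Finset.card_le_card hsub
      rwa [Finset.card_union_of_disjoint (by simp [Finset.disjoint_left]),
        Finset.card_image_of_injective _ Sum.inl_injective,
        Finset.card_image_of_injective _ Sum.inr_injective, Finset.card_univ] at this
    exact le_trans (min_le_left _ _) (by omega)
  · push_neg at hall
    obtain ⟨w0, hw0⟩ := hall
    have hallV : ∀ v : V, Sum.inl v ∈ C := by
      intro v
      by_contra hv
      have : (joinG G H).Adj (Sum.inl v) (Sum.inr w0) := trivial
      obtain ⟨x, hxC, hxe⟩ := hVC s(Sum.inl v, Sum.inr w0) this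
      rcases Sym2.mem_iff.mp hxe with rfl | rfl
      · exact hv hxC
      · exact hw0 hxC
    set D : Finset W := Finset.univ.filter (fun w => Sum.inr w ∈ C) with hD
    have hDVC : isVC H ↑D := by
      intro e he
      obtain ⟨a, b⟩ := e
      have : (joinG G H).Adj (Sum.inr a) (Sum.inr b) := he
      obtain ⟨x, hxC, hxe⟩ := hVC s(Sum.inr a, Sum.inr b) this
      rcases Sym2.mem_iff.mp hxe with rfl | rfl
      · exact ⟨a, by simp [hD]; exact hxC, Sym2.mem_mk_left _ _⟩
      · exact ⟨b, by simp [hD]; exact hxC, Sym2.mem_mk_right _ _⟩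
    have h1 : vcNum H ≤ D.card := Nat.sInf_le ⟨D, rfl, hDVC⟩
    have hsub : D.image Sum.inr ∪ Finset.univ.image Sum.inl ⊆ C := by
      intro x hx
      rcases Finset.mem_union.mp hx with hx | hx
      · obtain ⟨v, hv, rfl⟩ := Finset.mem_image.mp hx
        exact (Finset.mem_filter.mp hv).2
      · obtain ⟨v, _, rfl⟩ := Finset.mem_image.mp hx
        exact hallV v
    have hcard : D.card + Fintype.card V ≤ C.card := by
      have := Finset.card_le_card hsub
      rwa [Finset.card_union_of_disjoint (by simp [Finset.disjoint_left]),
        Finset.card_image_of_injective _ Sum.inr_injective,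
        Finset.card_image_of_injective _ Sum.inl_injective, Finset.card_univ] at this
    exact le_trans (min_le_right _ _) (by omega)

theorem stmt_5 {V W : Type*} [Fintype V] [Fintype W]
    (G : SimpleGraph V) (H : SimpleGraph W)
    (hm : 2 ≤ Fintype.card V) (hn : 2 ≤ Fintype.card W) :
    dem (joinG G H) = vcNum (joinG G H) ∧
    dem (joinG G H) = min (vcNum G + Fintype.card W) (vcNum H + Fintype.card V) := by
  have heq : dem (joinG G H) = vcNum (joinG G H) := by
    unfold dem vcNum
    congr 1
    ext k
    constructor
    · rintro ⟨M, hM, h⟩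
      exact ⟨M, hM, (demSet_iff_isVC G H hm hn ↑M).mp h⟩
    · rintro ⟨M, hM, h⟩
      exact ⟨M, hM, (demSet_iff_isVC G H hm hn ↑M).mpr h⟩
  refine ⟨heq, heq.trans ?_⟩
  refine le_antisymm (le_min (join_upper_left G H) (join_upper_right G H)) ?_
  obtain ⟨C, hC, hVC⟩ := vcNum_mem (joinG G H)
  rw [← hC]
  exact join_lower G H C hVC
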